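/- For signed compositions λ, μ of n, the following are equivalent: (a) λ ∼ μ (one is a reordering of the other); (b) G_λ = w^{−1} G_μ w for some w ∈ S_n; (c) G_λ = g^{−1} G_μ g for some g ∈ G_{r,n}. -/

import Mathlib

open Equiv SemidirectProduct

namespace CycSol

/-- The action of the symmetric group on the "torus" `(ℤ/r)^n` by permuting coordinates. -/
def act (r n : ℕ) : Equiv.Perm (Fin n) →* MulAut (Multiplicative (Fin n → ZMod r)) where
  toFun w :=
    { toFun := fun f => Multiplicative.ofAdd fun i => Multiplicative.toAdd f (w⁻¹ i)
      invFun := fun f => Multiplicative.ofAdd fun i => Multiplicative.toAdd f (w i)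
      left_inv := fun f => by
        show Multiplicative.ofAdd (fun i => Multiplicative.toAdd f (w⁻¹ (w i))) = f
        simp
      right_inv := fun f => by
        show Multiplicative.ofAdd (fun i => Multiplicative.toAdd f (w (w⁻¹ i))) = f
        simp
      map_mul' := fun f g => rfl }
  map_one' := by
    ext f : 1
    show Multiplicative.ofAdd (fun i => Multiplicative.toAdd f ((1 : Equiv.Perm (Fin n))⁻¹ i)) = f
    simp
  map_mul' := fun u v => by
    ext f : 1
    show Multiplicative.ofAdd (fun i => Multiplicative.toAdd f ((u * v)⁻¹ i)) = _
    simp [Equiv.Perm.mul_apply, mul_inv_rev]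

/-- The wreath product `(ℤ/r) ≀ S_n`, i.e. the complex reflection group `G(r,1,n)`. -/
abbrev Grn (r n : ℕ) :=
  SemidirectProduct (Multiplicative (Fin n → ZMod r)) (Equiv.Perm (Fin n)) (act r n)

/-- The generator `t_i`. -/
def tGen (r n : ℕ) (i : Fin n) : Grn r n :=
  inl (Multiplicative.ofAdd (Pi.single i 1))

/-- `sGen i j` is the transposition `(i,j)`, viewed inside `G(r,1,n)`. -/
def sGen (r n : ℕ) (i j : Fin n) : Grn r n := inr (Equiv.swap i j)

/-- `t^α` for a vector `α ∈ {0,…,r-1}^n`. -/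
def tPow (r n : ℕ) (α : Fin n → Fin r) : Grn r n :=
  inl (Multiplicative.ofAdd fun i => ((α i : ℕ) : ZMod r))

/-- The generating set `Π = {t_1,…,t_n, s_1,…,s_{n-1}}`. -/
def PiSet (r n : ℕ) : Set (Grn r n) :=
  {g | (∃ i : Fin n, g = tGen r n i) ∨
       (∃ i j : Fin n, (j : ℕ) = (i : ℕ) + 1 ∧ g = sGen r n i j)}

/-- The `Π`-length of an element of `G(r,1,n)`. -/
noncomputable def len (r n : ℕ) (g : Grn r n) : ℕ :=
  sInf {k | ∃ l : List (Grn r n), l.length = k ∧ (∀ x ∈ l, x ∈ PiSet r n) ∧ l.prod = g}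

/-- A signed composition of `n`: a list of nonzero integers whose absolute values sum to `n`. -/
def IsSignedComp (n : ℕ) (μ : List ℤ) : Prop :=
  (∀ x ∈ μ, x ≠ 0) ∧ (μ.map Int.natAbs).sum = n

/-- The type of signed compositions of `n`. -/
abbrev SComp (n : ℕ) := {l : List ℤ // IsSignedComp n l}

/-- `μ̄_i = |μ_1| + ⋯ + |μ_i|`. -/
def absPrefix (μ : List ℤ) (i : ℕ) : ℕ := ((μ.take i).map Int.natAbs).sum

/-- The subset `Π_μ ⊆ Π` attached to a signed composition `μ` (here `t_j, s_j` are indexed by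
`j : Fin n`, i.e. `0`-based). -/
def PiMu (r n : ℕ) (μ : List ℤ) : Set (Grn r n) :=
  {g | (∃ j : Fin n, (∃ i, i < μ.length ∧ 0 < μ.getD i 0 ∧
          absPrefix μ i ≤ (j : ℕ) ∧ (j : ℕ) < absPrefix μ (i + 1)) ∧ g = tGen r n j) ∨
       (∃ j k : Fin n, (k : ℕ) = (j : ℕ) + 1 ∧ (∃ i, i < μ.length ∧
          absPrefix μ i ≤ (j : ℕ) ∧ (k : ℕ) < absPrefix μ (i + 1)) ∧ g = sGen r n j k)}

/-- The reflection subgroup `G_μ = ⟨Π_μ⟩`. -/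
def Gmu (r n : ℕ) (μ : List ℤ) : Subgroup (Grn r n) := Subgroup.closure (PiMu r n μ)

/-- The subgroup `T = (ℤ/r)^n` of `G(r,1,n)`. -/
def Tsub (r n : ℕ) : Subgroup (Grn r n) :=
  (inl : Multiplicative (Fin n → ZMod r) →* Grn r n).range

/-- The subgroup `S_n` of `G(r,1,n)`. -/
def Ssub (r n : ℕ) : Subgroup (Grn r n) :=
  (inr : Equiv.Perm (Fin n) →* Grn r n).range

/-- `T_{-μ}`: the subgroup of `T` generated by those `t_i` not lying in `G_μ`. -/
def Tneg (r n : ℕ) (μ : List ℤ) : Subgroup (Grn r n) :=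
  Subgroup.closure {g | ∃ i : Fin n, tGen r n i ∉ Gmu r n μ ∧ g = tGen r n i}

/-- The Young subgroup `S_{μ^+} = G_μ ∩ S_n`, as a subgroup of `S_n`. -/
def youngS (r n : ℕ) (μ : List ℤ) : Subgroup (Equiv.Perm (Fin n)) :=
  (Gmu r n μ).comap (inr : Equiv.Perm (Fin n) →* Grn r n)

/-- `𝒟_{μ^+}`: the permutations of minimal (Coxeter = `Π`-) length in their right coset
`S_{μ^+} w`. -/
noncomputable def Dset (r n : ℕ) (μ : List ℤ) : Set (Equiv.Perm (Fin n)) :=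
  {d | ∀ w : Equiv.Perm (Fin n), w * d⁻¹ ∈ youngS r n μ →
        len r n (inr d) ≤ len r n (inr w)}

/-- `𝒟_{μ^+ν^+} = 𝒟_{μ^+} ∩ 𝒟_{ν^+}^{-1}`. -/
noncomputable def DD (r n : ℕ) (μ ν : List ℤ) : Set (Equiv.Perm (Fin n)) :=
  Dset r n μ ∩ {d | d⁻¹ ∈ Dset r n ν}

/-- `𝓔_μ`: the elements of minimal `Π`-length in their right coset `G_μ e`. -/
noncomputable def Ecal (r n : ℕ) (μ : List ℤ) : Set (Grn r n) :=
  {e | ∀ g : Grn r n, g * e⁻¹ ∈ Gmu r n μ → len r n e ≤ len r n g}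

/-- `E_μ = Σ_{e ∈ 𝓔_μ} e` in the group algebra `R G(r,1,n)`. -/
noncomputable def Emu (R : Type) [CommRing R] (r n : ℕ) (μ : List ℤ) :
    MonoidAlgebra R (Grn r n) :=
  ∑ᶠ e ∈ Ecal r n μ, MonoidAlgebra.of R (Grn r n) e

/-- The generating set `{E_μ : μ a signed composition of n}` of the cyclotomic Solomon
algebra. -/
def SolSet (R : Type) [CommRing R] (r n : ℕ) : Set (MonoidAlgebra R (Grn r n)) :=
  {x | ∃ μ : List ℤ, IsSignedComp n μ ∧ x = Emu R r n μ}

/-- The cyclotomic Solomon algebra `Sol(G(r,1,n))`. -/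
noncomputable def Sol (R : Type) [CommRing R] (r n : ℕ) :
    Subalgebra R (MonoidAlgebra R (Grn r n)) :=
  Algebra.adjoin R (SolSet R r n)


variable {n : ℕ}

theorem Equiv.Perm.inv_apply_self {α : Type*} (f : Equiv.Perm α) (x : α) : f⁻¹ (f x) = x :=
  Equiv.symm_apply_apply f x

theorem Equiv.Perm.apply_inv_self {α : Type*} (f : Equiv.Perm α) (x : α) : f (f⁻¹ x) = x :=
  Equiv.apply_symm_apply f x

lemma absPrefix_eq (μ : List ℤ) (i : ℕ) : absPrefix μ i = ((μ.map Int.natAbs).take i).sum := by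
  rw [absPrefix, List.map_take]

lemma absPrefix_zero (μ : List ℤ) : absPrefix μ 0 = 0 := rfl

lemma absPrefix_succ (μ : List ℤ) {i : ℕ} (h : i < μ.length) :
    absPrefix μ (i + 1) = absPrefix μ i + (μ.get ⟨i, h⟩).natAbs := by
  rw [absPrefix_eq, absPrefix_eq, List.sum_take_succ _ i (by simpa using h)]
  simp

lemma absPrefix_of_le (μ : List ℤ) {i : ℕ} (h : μ.length ≤ i) :
    absPrefix μ i = absPrefix μ μ.length := by
  rw [absPrefix_eq, absPrefix_eq, List.take_of_length_le (by simpa using h),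
    List.take_of_length_le (by simp)]

lemma absPrefix_mono (μ : List ℤ) : Monotone (absPrefix μ) := by
  apply monotone_nat_of_le_succ
  intro i
  by_cases h : i < μ.length
  · rw [absPrefix_succ μ h]; omega
  · rw [absPrefix_of_le μ (show μ.length ≤ i by omega),
      absPrefix_of_le μ (show μ.length ≤ i + 1 by omega)]

lemma absPrefix_length (hμ : IsSignedComp n μ) : absPrefix μ μ.length = n := by
  rw [absPrefix_eq, List.take_of_length_le (by simp)]; exact hμ.2

lemma absPrefix_le_n (hμ : IsSignedComp n μ) (i : ℕ) : absPrefix μ i ≤ n := by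
  rcases le_or_gt μ.length i with h | h
  · rw [absPrefix_of_le μ h, absPrefix_length hμ]
  · exact (absPrefix_mono μ h.le).trans_eq (absPrefix_length hμ)

lemma absPrefix_lt_succ (hμ : IsSignedComp n μ) {i : ℕ} (h : i < μ.length) :
    absPrefix μ i < absPrefix μ (i + 1) := by
  rw [absPrefix_succ μ h]
  have := hμ.1 (μ.get ⟨i, h⟩) (List.get_mem μ ⟨i, h⟩)
  omega

/-- The index of the block containing position `j`. -/
def blk (μ : List ℤ) (j : ℕ) : ℕ := Nat.findGreatest (fun i => absPrefix μ i ≤ j) μ.length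

lemma blk_le (μ : List ℤ) (j : ℕ) : blk μ j ≤ μ.length := Nat.findGreatest_le _

lemma absPrefix_blk_le (μ : List ℤ) (j : ℕ) : absPrefix μ (blk μ j) ≤ j :=
  Nat.findGreatest_spec (P := fun i => absPrefix μ i ≤ j) (Nat.zero_le _)
    (by simp [absPrefix_zero])

lemma blk_lt_length (hμ : IsSignedComp n μ) {j : ℕ} (hj : j < n) : blk μ j < μ.length := by
  rcases Nat.lt_or_ge (blk μ j) μ.length with h | h
  · exact h
  · have h1 := blk_le μ j
    have h2 := absPrefix_blk_le μ j
    have : blk μ j = μ.length := le_antisymm h1 h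
    rw [this, absPrefix_length hμ] at h2
    omega

lemma lt_absPrefix_blk_succ (hμ : IsSignedComp n μ) {j : ℕ} (hj : j < n) :
    j < absPrefix μ (blk μ j + 1) := by
  by_contra hc
  exact Nat.findGreatest_is_greatest (P := fun i => absPrefix μ i ≤ j) (n := μ.length)
    (k := blk μ j + 1) (Nat.lt_succ_self _) (blk_lt_length hμ hj) (by omega)

lemma blk_eq_of (hμ : IsSignedComp n μ) {i j : ℕ} (hj : j < n)
    (h1 : absPrefix μ i ≤ j) (h2 : j < absPrefix μ (i + 1)) : blk μ j = i := by
  rcases Nat.lt_trichotomy (blk μ j) i with h | h | h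
  · have : absPrefix μ (blk μ j + 1) ≤ absPrefix μ i := absPrefix_mono μ (by omega)
    have := lt_absPrefix_blk_succ hμ hj
    omega
  · exact h
  · have : absPrefix μ (i + 1) ≤ absPrefix μ (blk μ j) := absPrefix_mono μ (by omega)
    have := absPrefix_blk_le μ j
    omega

lemma blk_mono (μ : List ℤ) {j j' : ℕ} (h : j ≤ j') : blk μ j ≤ blk μ j' :=
  Nat.findGreatest_mono (fun _ hi => hi.trans h) le_rfl

-- chunk2: Psub and membership lemmas
variable {r n : ℕ}

lemma act_apply (w : Equiv.Perm (Fin n)) (x : Multiplicative (Fin n → ZMod r)) (j : Fin n) :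
    Multiplicative.toAdd ((act r n w) x) j = Multiplicative.toAdd x (w⁻¹ j) := rfl

/-- Block-preserving permutations. -/
def BPerm (μ : List ℤ) (w : Equiv.Perm (Fin n)) : Prop :=
  ∀ j : Fin n, blk μ (w j : ℕ) = blk μ (j : ℕ)

lemma BPerm.inv_apply {μ : List ℤ} {w : Equiv.Perm (Fin n)} (h : BPerm μ w) (j : Fin n) :
    blk μ (w⁻¹ j : ℕ) = blk μ (j : ℕ) := by
  conv_rhs => rw [← Equiv.apply_symm_apply w j]
  exact (h (w⁻¹ j)).symm

/-- Torus elements supported on positive blocks. -/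
def SuppPos (r : ℕ) (μ : List ℤ) (x : Multiplicative (Fin n → ZMod r)) : Prop :=
  ∀ j : Fin n, Multiplicative.toAdd x j ≠ 0 → 0 < μ.getD (blk μ (j : ℕ)) 0

/-- The subgroup of elements whose permutation part preserves blocks and whose torus
part is supported on positive blocks. -/
def Psub (r n : ℕ) (μ : List ℤ) : Subgroup (Grn r n) where
  carrier := {g | BPerm μ g.right ∧ SuppPos r μ g.left}
  one_mem' := by
    constructor
    · intro j; rw [one_right]; rfl
    · intro j hj; rw [one_left] at hj; simp at hj
  mul_mem' := by
    rintro a b ⟨ha1, ha2⟩ ⟨hb1, hb2⟩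
    constructor
    · intro j
      rw [mul_right]
      rw [Equiv.Perm.mul_apply, ha1, hb1]
    · intro j hj
      rw [mul_left, toAdd_mul, Pi.add_apply, act_apply] at hj
      rcases Classical.em (Multiplicative.toAdd a.left j = 0) with h0 | h0
      · rw [h0, zero_add] at hj
        have := hb2 _ hj
        rwa [ha1.inv_apply] at this
      · exact ha2 _ h0
  inv_mem' := by
    rintro a ⟨ha1, ha2⟩
    constructor
    · intro j
      rw [inv_right]
      exact ha1.inv_apply j
    · intro j hj
      rw [inv_left, act_apply, inv_inv, toAdd_inv, Pi.neg_apply, neg_ne_zero] at hj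
      have := ha2 _ hj
      rwa [ha1] at this

lemma Gmu_le_Psub (hμ : IsSignedComp n μ) : Gmu r n μ ≤ Psub r n μ := by
  rw [Gmu, Subgroup.closure_le]
  rintro g (⟨j, ⟨i, hi, hpos, h1, h2⟩, rfl⟩ | ⟨j, k, hk, ⟨i, hi, h1, h2⟩, rfl⟩)
  · have hblk : blk μ (j : ℕ) = i := blk_eq_of hμ j.isLt h1 h2
    constructor
    · intro m; rw [tGen, right_inl]; rfl
    · intro m hm
      rw [tGen, left_inl] at hm
      have : m = j := by
        by_contra hne
        rw [toAdd_ofAdd, Pi.single_eq_of_ne hne] at hm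
        exact hm rfl
      rw [this, hblk]
      exact hpos
  · have hjk : (j : ℕ) < (k : ℕ) := by omega
    have hblkj : blk μ (j : ℕ) = i := blk_eq_of hμ j.isLt h1 (by omega)
    have hblkk : blk μ (k : ℕ) = i := blk_eq_of hμ k.isLt (by omega) h2
    constructor
    · intro m
      rw [sGen, right_inr]
      rcases Classical.em (m = j) with rfl | hmj
      · rw [Equiv.swap_apply_left, hblkj, hblkk]
      rcases Classical.em (m = k) with rfl | hmk
      · rw [Equiv.swap_apply_right, hblkj, hblkk]
      · rw [Equiv.swap_apply_of_ne_of_ne hmj hmk]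
    · intro m hm
      rw [sGen, left_inr] at hm
      simp at hm

lemma mem_Gmu_BPerm (hμ : IsSignedComp n μ) {x : Grn r n} (hx : x ∈ Gmu r n μ) :
    BPerm μ x.right :=
  (Gmu_le_Psub hμ hx).1

lemma mem_Gmu_SuppPos (hμ : IsSignedComp n μ) {x : Grn r n} (hx : x ∈ Gmu r n μ) :
    SuppPos r μ x.left :=
  (Gmu_le_Psub hμ hx).2

lemma tGen_mem_iff (hr : 2 ≤ r) (hμ : IsSignedComp n μ) (i : Fin n) :
    tGen r n i ∈ Gmu r n μ ↔ 0 < μ.getD (blk μ (i : ℕ)) 0 := by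
  constructor
  · intro h
    have := mem_Gmu_SuppPos hμ h i
    apply this
    rw [tGen, left_inl, toAdd_ofAdd, Pi.single_eq_same]
    haveI : Fact (1 < r) := ⟨hr⟩
    exact one_ne_zero
  · intro hpos
    apply Subgroup.subset_closure
    left
    exact ⟨i, ⟨blk μ (i : ℕ), blk_lt_length hμ i.isLt, hpos, absPrefix_blk_le μ _,
      lt_absPrefix_blk_succ hμ i.isLt⟩, rfl⟩

lemma sGen_mem (hμ : IsSignedComp n μ) (j k : Fin n) (hk : (k : ℕ) = (j : ℕ) + 1)
    (hblk : blk μ (j : ℕ) = blk μ (k : ℕ)) : sGen r n j k ∈ Gmu r n μ := by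
  apply Subgroup.subset_closure
  right
  refine ⟨j, k, hk, ⟨blk μ (j : ℕ), blk_lt_length hμ j.isLt, absPrefix_blk_le μ _, ?_⟩, rfl⟩
  rw [hblk]
  exact lt_absPrefix_blk_succ hμ k.isLt

lemma orbit_of_blk_eq_aux (hμ : IsSignedComp n μ) :
    ∀ d (i j : Fin n), (j : ℕ) = (i : ℕ) + d → blk μ (i : ℕ) = blk μ (j : ℕ) →
      ∃ u ∈ Gmu r n μ, rightHom u i = j := by
  intro d
  induction d with
  | zero =>
    intro i j hij _
    exact ⟨1, one_mem _, by ext; simp; omega⟩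
  | succ d ih =>
    intro i j hij hblk
    have hm : (i : ℕ) + d < n := by have := j.isLt; omega
    set m : Fin n := ⟨(i : ℕ) + d, hm⟩ with hmdef
    have hmv : (m : ℕ) = (i : ℕ) + d := rfl
    have hblkm : blk μ (i : ℕ) = blk μ (m : ℕ) := by
      have h1 : blk μ (i : ℕ) ≤ blk μ (m : ℕ) := blk_mono μ (by omega)
      have h2 : blk μ (m : ℕ) ≤ blk μ (j : ℕ) := blk_mono μ (by omega)
      omega
    obtain ⟨u, hu, hui⟩ := ih i m rfl hblkm
    refine ⟨sGen r n m j * u, mul_mem (sGen_mem hμ m j (by omega) (by rw [← hblkm, hblk])) hu, ?_⟩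
    rw [map_mul, Equiv.Perm.mul_apply, hui, sGen, rightHom_inr, Equiv.swap_apply_left]

lemma orbit_iff (hμ : IsSignedComp n μ) (i j : Fin n) :
    (∃ u ∈ Gmu r n μ, rightHom u i = j) ↔ blk μ (i : ℕ) = blk μ (j : ℕ) := by
  constructor
  · rintro ⟨u, hu, rfl⟩
    exact (mem_Gmu_BPerm hμ hu i).symm
  · intro hblk
    rcases Nat.le_total (i : ℕ) (j : ℕ) with h | h
    · exact orbit_of_blk_eq_aux hμ ((j : ℕ) - (i : ℕ)) i j (by omega) hblk
    · obtain ⟨u, hu, huj⟩ := orbit_of_blk_eq_aux hμ ((i : ℕ) - (j : ℕ)) j i (by omega) hblk.symm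
      refine ⟨u⁻¹, inv_mem hu, ?_⟩
      rw [map_inv, ← huj]
      simp
-- chunk3: conjugation lemmas and counting
lemma conj_inl_aux (f x : Multiplicative (Fin n → ZMod r)) (w : Equiv.Perm (Fin n)) :
    (inl f * inr w : Grn r n) * inl x * (inl f * inr w)⁻¹ = inl ((act r n w) x) := by
  rw [mul_inv_rev]
  have h1 : (inr w : Grn r n) * inl x * (inr w)⁻¹ = inl ((act r n w) x) := by
    rw [← map_inv]
    exact (inl_aut w x).symm
  calc inl f * inr w * inl x * ((inr w)⁻¹ * (inl f)⁻¹)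
      = inl f * (inr w * inl x * (inr w)⁻¹) * (inl f)⁻¹ := by
        simp [mul_assoc]
    _ = inl f * inl ((act r n w) x) * (inl f)⁻¹ := by rw [h1]
    _ = inl (f * (act r n w) x * f⁻¹) := by
        rw [← map_inv, ← map_mul, ← map_mul]
    _ = inl ((act r n w) x) := by
        rw [mul_comm f, mul_assoc, mul_inv_cancel, mul_one]

lemma conj_inl (g : Grn r n) (x : Multiplicative (Fin n → ZMod r)) :
    g * inl x * g⁻¹ = inl ((act r n g.right) x) := by
  conv_lhs => rw [← inl_left_mul_inr_right g]
  exact conj_inl_aux g.left x g.right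

lemma conj_tGen (g : Grn r n) (i : Fin n) :
    g * tGen r n i * g⁻¹ = tGen r n (g.right i) := by
  rw [tGen, conj_inl, tGen]
  congr 1
  apply Multiplicative.toAdd.injective
  funext j
  rcases Classical.em (j = g.right i) with rfl | hne
  · rw [act_apply, toAdd_ofAdd, toAdd_ofAdd, Equiv.Perm.inv_apply_self,
      Pi.single_eq_same, Pi.single_eq_same]
  · have hne' : g.right⁻¹ j ≠ i := by
      intro h
      apply hne
      rw [← h, Equiv.Perm.apply_inv_self]
    rw [act_apply, toAdd_ofAdd, toAdd_ofAdd, Pi.single_eq_of_ne hne', Pi.single_eq_of_ne hne]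

lemma mem_map_conj_iff {G : Type*} [Group G] (H : Subgroup G) (g u : G) :
    u ∈ H.map (MulAut.conj g⁻¹).toMonoidHom ↔ g * u * g⁻¹ ∈ H := by
  rw [Subgroup.mem_map]
  constructor
  · rintro ⟨y, hy, rfl⟩
    simpa [MulAut.conj_apply, mul_assoc] using hy
  · intro h
    exact ⟨g * u * g⁻¹, h, by simp [MulAut.conj_apply, mul_assoc]⟩

lemma card_blk_eq (hμ : IsSignedComp n μ) {i : ℕ} (hi : i < μ.length) :
    (Finset.univ.filter fun j : Fin n => blk μ (j : ℕ) = i).card = (μ.get ⟨i, hi⟩).natAbs := by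
  have hsucc := absPrefix_succ μ hi
  have hb : absPrefix μ (i + 1) ≤ n := absPrefix_le_n hμ _
  have key : (Finset.univ.filter fun j : Fin n => blk μ (j : ℕ) = i).card
      = (Finset.Ico (absPrefix μ i) (absPrefix μ (i + 1))).card := by
    apply Finset.card_bij'
      (s := Finset.univ.filter fun j : Fin n => blk μ (j : ℕ) = i)
      (t := Finset.Ico (absPrefix μ i) (absPrefix μ (i + 1)))
      (fun j _ => (j : ℕ))
      (fun m hm => (⟨m, by rw [Finset.mem_Ico] at hm; omega⟩ : Fin n))
    case hi =>
      intro a ha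
      rw [Finset.mem_filter] at ha
      rw [Finset.mem_Ico]
      exact ⟨ha.2 ▸ absPrefix_blk_le μ _, ha.2 ▸ lt_absPrefix_blk_succ hμ a.isLt⟩
    case hj =>
      intro m hm
      have hm' := hm
      rw [Finset.mem_Ico] at hm'
      rw [Finset.mem_filter]
      exact ⟨Finset.mem_univ _, blk_eq_of hμ (by omega) hm'.1 hm'.2⟩
    case left_inv => intro a _; exact Fin.ext rfl
    case right_inv => intro m _; rfl
  rw [key, Nat.card_Ico]
  omega

lemma card_blk_map {α β : List ℤ} (v : Equiv.Perm (Fin n)) {a b : ℕ}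
    (hv : ∀ j : Fin n, blk α (j : ℕ) = a → blk β (v j : ℕ) = b)
    (hv' : ∀ j : Fin n, blk β (j : ℕ) = b → blk α (v⁻¹ j : ℕ) = a) :
    (Finset.univ.filter fun j : Fin n => blk α (j : ℕ) = a).card
      = (Finset.univ.filter fun j : Fin n => blk β (j : ℕ) = b).card := by
  apply Finset.card_nbij' (fun j => v j) (fun j => v⁻¹ j)
  · intro j hj
    rw [Finset.mem_coe, Finset.mem_filter] at hj ⊢
    exact ⟨Finset.mem_univ _, hv j hj.2⟩
  · intro j hj
    rw [Finset.mem_coe, Finset.mem_filter] at hj ⊢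
    exact ⟨Finset.mem_univ _, hv' j hj.2⟩
  · intro j _; simp
  · intro j _; simp
-- chunk4: list permutation lemmas and (c) → (a)
lemma perm_of_equiv {l₁ l₂ : List ℤ} (e : Fin l₁.length ≃ Fin l₂.length)
    (h : ∀ i, l₁.get i = l₂.get (e i)) : l₁.Perm l₂ := by
  have hlen : l₁.length = l₂.length := Fin.equiv_iff_eq.mp ⟨e⟩
  let σ : Equiv.Perm (Fin l₂.length) := (finCongr hlen).symm.trans e
  have h1 : l₁ = List.ofFn (l₂.get ∘ σ) := by
    apply List.ext_get (by simp [hlen])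
    intro m hm1 hm2
    rw [List.get_ofFn]
    show l₁.get ⟨m, hm1⟩ = l₂.get (σ (Fin.cast (by simp) ⟨m, hm2⟩))
    have h2 : σ (Fin.cast (by simp) ⟨m, hm2⟩) = e ⟨m, hm1⟩ := by
      show e ((finCongr hlen).symm (Fin.cast (by simp) ⟨m, hm2⟩)) = e ⟨m, hm1⟩
      congr 1
    rw [h2, h]
  have hp : (List.ofFn (l₂.get ∘ σ)).Perm (List.ofFn l₂.get) :=
    Equiv.Perm.ofFn_comp_perm σ l₂.get
  rw [List.ofFn_get] at hp
  rw [h1]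
  exact hp

lemma exists_equiv_of_perm {α : Type*} {l₁ l₂ : List α} (h : l₁.Perm l₂) :
    ∃ e : Fin l₁.length ≃ Fin l₂.length, ∀ i, l₁.get i = l₂.get (e i) := by
  induction h with
  | nil => exact ⟨Equiv.refl _, fun i => rfl⟩
  | cons x h ih =>
    obtain ⟨e, he⟩ := ih
    refine ⟨(finSuccEquiv _).trans ((Equiv.optionCongr e).trans (finSuccEquiv _).symm), ?_⟩
    intro i
    induction i using Fin.cases with
    | zero => simp
    | succ i => simpa using he i
  | swap x y l =>
    let f : Fin (y :: x :: l).length → Fin (x :: y :: l).length := fun i =>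
      if (i : ℕ) = 0 then ⟨1, by simp⟩ else if (i : ℕ) = 1 then ⟨0, by simp⟩
      else ⟨(i : ℕ), i.isLt⟩
    let g' : Fin (x :: y :: l).length → Fin (y :: x :: l).length := fun i =>
      if (i : ℕ) = 0 then ⟨1, by simp⟩ else if (i : ℕ) = 1 then ⟨0, by simp⟩
      else ⟨(i : ℕ), i.isLt⟩
    have hinv1 : ∀ i, g' (f i) = i := by
      intro i
      apply Fin.ext
      by_cases h0 : (i : ℕ) = 0
      · simp only [f, g']; split_ifs <;> simp_all
      by_cases h1 : (i : ℕ) = 1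
      · simp only [f, g']; split_ifs <;> simp_all
      · simp only [f, g']; split_ifs <;> simp_all
    have hinv2 : ∀ i, f (g' i) = i := by
      intro i
      apply Fin.ext
      by_cases h0 : (i : ℕ) = 0
      · simp only [f, g']; split_ifs <;> simp_all
      by_cases h1 : (i : ℕ) = 1
      · simp only [f, g']; split_ifs <;> simp_all
      · simp only [f, g']; split_ifs <;> simp_all
    refine ⟨⟨f, g', hinv1, hinv2⟩, ?_⟩
    intro i
    show (y :: x :: l).get i = (x :: y :: l).get (f i)
    match i with
    | ⟨0, h0⟩ =>
      have : f ⟨0, h0⟩ = ⟨1, by simp⟩ := by simp [f]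
      rw [this]
      rfl
    | ⟨1, h1⟩ =>
      have : f ⟨1, h1⟩ = ⟨0, by simp⟩ := by simp [f]
      rw [this]
      rfl
    | ⟨m + 2, hm⟩ =>
      have : f ⟨m + 2, hm⟩ = ⟨m + 2, hm⟩ := by simp [f]
      rw [this]
      rfl
  | trans h₁ h₂ ih₁ ih₂ =>
    obtain ⟨e₁, he₁⟩ := ih₁
    obtain ⟨e₂, he₂⟩ := ih₂
    exact ⟨e₁.trans e₂, fun i => (he₁ i).trans (he₂ _)⟩

lemma perm_of_conj (hr : 2 ≤ r) {lam mu : List ℤ} (hlam : IsSignedComp n lam)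
    (hmu : IsSignedComp n mu) (g : Grn r n)
    (h : Gmu r n lam = (Gmu r n mu).map (MulAut.conj g⁻¹).toMonoidHom) :
    lam.Perm mu := by
  have hmem : ∀ u : Grn r n, u ∈ Gmu r n lam ↔ g * u * g⁻¹ ∈ Gmu r n mu := by
    intro u; rw [h, mem_map_conj_iff]
  set v := g.right with hv
  have C2 : ∀ i : Fin n,
      (0 < lam.getD (blk lam (i : ℕ)) 0 ↔ 0 < mu.getD (blk mu (v i : ℕ)) 0) := by
    intro i
    rw [← tGen_mem_iff hr hlam, ← tGen_mem_iff hr hmu, hmem, conj_tGen]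
  have horb : ∀ i j : Fin n, (∃ u ∈ Gmu r n lam, rightHom u i = j) ↔
      (∃ u' ∈ Gmu r n mu, rightHom u' (v i) = v j) := by
    intro i j
    constructor
    · rintro ⟨u, hu, huij⟩
      refine ⟨g * u * g⁻¹, (hmem u).1 hu, ?_⟩
      have hru : rightHom u i = j := huij
      show (rightHom (g * u * g⁻¹)) (v i) = v j
      rw [map_mul, map_mul, map_inv]
      have hrg : rightHom g = v := rfl
      rw [hrg]
      rw [Equiv.Perm.mul_apply, Equiv.Perm.mul_apply, Equiv.Perm.inv_apply_self, hru]
    · rintro ⟨u', hu', huv⟩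
      refine ⟨g⁻¹ * u' * g, ?_, ?_⟩
      · rw [hmem]
        have : g * (g⁻¹ * u' * g) * g⁻¹ = u' := by group
        rwa [this]
      · show (rightHom (g⁻¹ * u' * g)) i = j
        rw [map_mul, map_mul, map_inv]
        have hrg : rightHom g = v := rfl
        rw [hrg]
        rw [Equiv.Perm.mul_apply, Equiv.Perm.mul_apply, huv, Equiv.Perm.inv_apply_self]
  have C1 : ∀ i j : Fin n,
      (blk lam (i : ℕ) = blk lam (j : ℕ) ↔ blk mu (v i : ℕ) = blk mu (v j : ℕ)) := by
    intro i j
    rw [← orbit_iff hlam, ← orbit_iff hmu, horb]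
  -- block starts
  have hstartl : ∀ i : Fin lam.length, absPrefix lam (i : ℕ) < n := fun i =>
    lt_of_lt_of_le (absPrefix_lt_succ hlam i.isLt) (absPrefix_le_n hlam _)
  have hstartm : ∀ i : Fin mu.length, absPrefix mu (i : ℕ) < n := fun i =>
    lt_of_lt_of_le (absPrefix_lt_succ hmu i.isLt) (absPrefix_le_n hmu _)
  let jsl : Fin lam.length → Fin n := fun i => ⟨absPrefix lam (i : ℕ), hstartl i⟩
  let jsm : Fin mu.length → Fin n := fun i => ⟨absPrefix mu (i : ℕ), hstartm i⟩
  have hjsl : ∀ i, blk lam ((jsl i : Fin n) : ℕ) = (i : ℕ) := fun i =>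
    blk_eq_of hlam (hstartl i) le_rfl (absPrefix_lt_succ hlam i.isLt)
  have hjsm : ∀ i, blk mu ((jsm i : Fin n) : ℕ) = (i : ℕ) := fun i =>
    blk_eq_of hmu (hstartm i) le_rfl (absPrefix_lt_succ hmu i.isLt)
  let σ : Fin lam.length → Fin mu.length := fun i =>
    ⟨blk mu (v (jsl i) : ℕ), blk_lt_length hmu (v (jsl i)).isLt⟩
  let τ : Fin mu.length → Fin lam.length := fun i =>
    ⟨blk lam (v⁻¹ (jsm i) : ℕ), blk_lt_length hlam (v⁻¹ (jsm i)).isLt⟩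
  have hτσ : ∀ i, τ (σ i) = i := by
    intro i
    apply Fin.ext
    show blk lam (v⁻¹ (jsm (σ i)) : ℕ) = (i : ℕ)
    have h1 : blk mu (v (jsl i) : ℕ) = blk mu (v (v⁻¹ (jsm (σ i))) : ℕ) := by
      rw [Equiv.Perm.apply_inv_self, hjsm]
    have h2 := (C1 (jsl i) (v⁻¹ (jsm (σ i)))).mpr h1
    rw [← h2, hjsl]
  have hστ : ∀ i, σ (τ i) = i := by
    intro i
    apply Fin.ext
    show blk mu (v (jsl (τ i)) : ℕ) = (i : ℕ)
    have h1 : blk lam ((jsl (τ i) : Fin n) : ℕ) = blk lam (v⁻¹ (jsm i) : ℕ) := by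
      rw [hjsl]
    have h2 := (C1 (jsl (τ i)) (v⁻¹ (jsm i))).mp h1
    rw [h2, Equiv.Perm.apply_inv_self, hjsm]
  let e : Fin lam.length ≃ Fin mu.length := ⟨σ, τ, hτσ, hστ⟩
  apply perm_of_equiv e
  intro i
  have hblkmap : ∀ j : Fin n, blk lam (j : ℕ) = (i : ℕ) → blk mu (v j : ℕ) = ((σ i : Fin mu.length) : ℕ) := by
    intro j hj
    have h1 : blk lam (j : ℕ) = blk lam ((jsl i : Fin n) : ℕ) := by rw [hj, hjsl]
    exact (C1 j (jsl i)).mp h1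
  have hblkmap' : ∀ j : Fin n, blk mu (j : ℕ) = ((σ i : Fin mu.length) : ℕ) →
      blk lam (v⁻¹ j : ℕ) = (i : ℕ) := by
    intro j hj
    have h1 : blk mu (v (v⁻¹ j) : ℕ) = blk mu (v (jsl i) : ℕ) := by
      rw [Equiv.Perm.apply_inv_self, hj]
    have h2 := (C1 (v⁻¹ j) (jsl i)).mpr h1
    rw [h2, hjsl]
  have hcard := card_blk_map (α := lam) (β := mu) v hblkmap hblkmap'
  rw [card_blk_eq hlam i.isLt, card_blk_eq hmu (σ i).isLt] at hcard
  have habs : (lam.get i).natAbs = (mu.get (σ i)).natAbs := hcard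
  have hsign : (0 < lam.getD (i : ℕ) 0 ↔ 0 < mu.getD ((σ i : Fin mu.length) : ℕ) 0) := by
    have hC := C2 (jsl i)
    rwa [hjsl i] at hC
  rw [List.getD_eq_getElem _ _ i.isLt, List.getD_eq_getElem _ _ (σ i).isLt] at hsign
  have hsign' : (0 < lam.get i ↔ 0 < mu.get (σ i)) := hsign
  have hne : lam.get i ≠ 0 := hlam.1 _ (List.get_mem lam i)
  show lam.get i = mu.get (σ i)
  by_cases hpos : 0 < lam.get i
  · have := hsign'.mp hpos
    omega
  · have h2 : ¬ 0 < mu.get (σ i) := fun hc => hpos (hsign'.mpr hc)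
    omega
-- chunk5: construction of the conjugating permutation
def wfun (α β : List ℤ) (hα : IsSignedComp n α) (hβ : IsSignedComp n β)
    (e : Fin α.length ≃ Fin β.length) (hget : ∀ i, α.get i = β.get (e i)) (j : Fin n) :
    Fin n :=
  ⟨absPrefix β ((e ⟨blk α (j : ℕ), blk_lt_length hα j.isLt⟩ : Fin β.length) : ℕ)
      + ((j : ℕ) - absPrefix α (blk α (j : ℕ))), by
    have hlt : blk α (j : ℕ) < α.length := blk_lt_length hα j.isLt
    have h1 : absPrefix α (blk α (j : ℕ)) ≤ (j : ℕ) := absPrefix_blk_le α _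
    have h2 : (j : ℕ) < absPrefix α (blk α (j : ℕ) + 1) := lt_absPrefix_blk_succ hα j.isLt
    have h3 : absPrefix α (blk α (j : ℕ) + 1)
        = absPrefix α (blk α (j : ℕ)) + (α.get ⟨blk α (j : ℕ), hlt⟩).natAbs :=
      absPrefix_succ α hlt
    have habs : (α.get ⟨blk α (j : ℕ), hlt⟩).natAbs
        = (β.get (e ⟨blk α (j : ℕ), hlt⟩)).natAbs :=
      congrArg Int.natAbs (hget _)
    have h4 : absPrefix β (((e ⟨blk α (j : ℕ), hlt⟩ : Fin β.length) : ℕ) + 1)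
        = absPrefix β ((e ⟨blk α (j : ℕ), hlt⟩ : Fin β.length) : ℕ)
          + (β.get (e ⟨blk α (j : ℕ), hlt⟩)).natAbs :=
      absPrefix_succ β (e _).isLt
    have h5 : absPrefix β (((e ⟨blk α (j : ℕ), hlt⟩ : Fin β.length) : ℕ) + 1) ≤ n :=
      absPrefix_le_n hβ _
    omega⟩

lemma wfun_blk (α β : List ℤ) (hα : IsSignedComp n α) (hβ : IsSignedComp n β)
    (e : Fin α.length ≃ Fin β.length) (hget : ∀ i, α.get i = β.get (e i)) (j : Fin n) :
    blk β ((wfun α β hα hβ e hget j : Fin n) : ℕ)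
      = ((e ⟨blk α (j : ℕ), blk_lt_length hα j.isLt⟩ : Fin β.length) : ℕ) := by
  have hlt : blk α (j : ℕ) < α.length := blk_lt_length hα j.isLt
  apply blk_eq_of hβ (wfun α β hα hβ e hget j).isLt
  · exact Nat.le_add_right _ _
  · show absPrefix β ((e ⟨blk α (j : ℕ), blk_lt_length hα j.isLt⟩ : Fin β.length) : ℕ)
        + ((j : ℕ) - absPrefix α (blk α (j : ℕ)))
      < absPrefix β (((e ⟨blk α (j : ℕ), blk_lt_length hα j.isLt⟩ : Fin β.length) : ℕ) + 1)
    have h1 : absPrefix α (blk α (j : ℕ)) ≤ (j : ℕ) := absPrefix_blk_le α _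
    have h2 : (j : ℕ) < absPrefix α (blk α (j : ℕ) + 1) := lt_absPrefix_blk_succ hα j.isLt
    have h3 : absPrefix α (blk α (j : ℕ) + 1)
        = absPrefix α (blk α (j : ℕ)) + (α.get ⟨blk α (j : ℕ), hlt⟩).natAbs :=
      absPrefix_succ α hlt
    have habs : (α.get ⟨blk α (j : ℕ), hlt⟩).natAbs
        = (β.get (e ⟨blk α (j : ℕ), hlt⟩)).natAbs :=
      congrArg Int.natAbs (hget _)
    have h4 : absPrefix β (((e ⟨blk α (j : ℕ), hlt⟩ : Fin β.length) : ℕ) + 1)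
        = absPrefix β ((e ⟨blk α (j : ℕ), hlt⟩ : Fin β.length) : ℕ)
          + (β.get (e ⟨blk α (j : ℕ), hlt⟩)).natAbs :=
      absPrefix_succ β (e _).isLt
    omega

lemma wfun_val (α β : List ℤ) (hα : IsSignedComp n α) (hβ : IsSignedComp n β)
    (e : Fin α.length ≃ Fin β.length) (hget : ∀ i, α.get i = β.get (e i)) (j : Fin n) :
    ((wfun α β hα hβ e hget j : Fin n) : ℕ)
      = absPrefix β ((e ⟨blk α (j : ℕ), blk_lt_length hα j.isLt⟩ : Fin β.length) : ℕ)
        + ((j : ℕ) - absPrefix α (blk α (j : ℕ))) := rfl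

lemma wfun_inv (α β : List ℤ) (hα : IsSignedComp n α) (hβ : IsSignedComp n β)
    (e : Fin α.length ≃ Fin β.length) (hget : ∀ i, α.get i = β.get (e i))
    (hget' : ∀ i, β.get i = α.get (e.symm i)) (j : Fin n) :
    wfun β α hβ hα e.symm hget' (wfun α β hα hβ e hget j) = j := by
  apply Fin.ext
  have hlt : blk α (j : ℕ) < α.length := blk_lt_length hα j.isLt
  have h0 : blk β ((wfun α β hα hβ e hget j : Fin n) : ℕ)
      = ((e ⟨blk α (j : ℕ), blk_lt_length hα j.isLt⟩ : Fin β.length) : ℕ) :=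
    wfun_blk α β hα hβ e hget j
  have hblkk : (⟨blk β ((wfun α β hα hβ e hget j : Fin n) : ℕ),
        blk_lt_length hβ (wfun α β hα hβ e hget j).isLt⟩ : Fin β.length)
      = e ⟨blk α (j : ℕ), blk_lt_length hα j.isLt⟩ := Fin.ext h0
  rw [wfun_val β α hβ hα e.symm hget' (wfun α β hα hβ e hget j)]
  rw [hblkk, Equiv.symm_apply_apply, h0, wfun_val α β hα hβ e hget j]
  have hvm : ((⟨blk α (j : ℕ), blk_lt_length hα j.isLt⟩ : Fin α.length) : ℕ)
      = blk α (j : ℕ) := rfl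
  rw [hvm]
  have h1 : absPrefix α (blk α (j : ℕ)) ≤ (j : ℕ) := absPrefix_blk_le α _
  omega

lemma wfun_H3 (α β : List ℤ) (hα : IsSignedComp n α) (hβ : IsSignedComp n β)
    (e : Fin α.length ≃ Fin β.length) (hget : ∀ i, α.get i = β.get (e i)) (j : Fin n)
    (hpos : 0 < α.getD (blk α (j : ℕ)) 0) :
    0 < β.getD (blk β ((wfun α β hα hβ e hget j : Fin n) : ℕ)) 0 := by
  set i : Fin α.length := ⟨blk α (j : ℕ), blk_lt_length hα j.isLt⟩ with hidef
  rw [wfun_blk α β hα hβ e hget j]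
  rw [List.getD_eq_getElem _ _ (e i).isLt]
  have h7 : β[((e i : Fin β.length) : ℕ)] = β.get (e i) := rfl
  rw [h7, ← hget i]
  have h8 : (i : ℕ) = blk α (j : ℕ) := rfl
  rw [List.getD_eq_getElem _ _ (h8 ▸ i.isLt)] at hpos
  exact hpos

-- conjugation of Π_α into Π_β
lemma conj_PiMu_mem {α β : List ℤ} (hα : IsSignedComp n α) (hβ : IsSignedComp n β)
    (u : Equiv.Perm (Fin n))
    (H1 : ∀ j1 j2 : Fin n, blk α (j1 : ℕ) = blk α (j2 : ℕ) →
      blk β (u j1 : ℕ) = blk β (u j2 : ℕ))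
    (H2 : ∀ j1 j2 : Fin n, (j2 : ℕ) = (j1 : ℕ) + 1 → blk α (j1 : ℕ) = blk α (j2 : ℕ) →
      (u j2 : ℕ) = (u j1 : ℕ) + 1)
    (H3 : ∀ j : Fin n, 0 < α.getD (blk α (j : ℕ)) 0 → 0 < β.getD (blk β (u j : ℕ)) 0)
    {x : Grn r n} (hx : x ∈ PiMu r n α) :
    (inr u : Grn r n) * x * (inr u)⁻¹ ∈ PiMu r n β := by
  rcases hx with ⟨j, ⟨i, hi, hpos, h1, h2⟩, rfl⟩ | ⟨j, k, hk, ⟨i, hi, h1, h2⟩, rfl⟩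
  · have hblkj : blk α (j : ℕ) = i := blk_eq_of hα j.isLt h1 h2
    have hc : (inr u : Grn r n) * tGen r n j * (inr u)⁻¹ = tGen r n (u j) := by
      have h := conj_tGen (inr u : Grn r n) j
      rwa [right_inr] at h
    rw [hc]
    left
    refine ⟨u j, ⟨blk β (u j : ℕ), blk_lt_length hβ (u j).isLt, ?_,
      absPrefix_blk_le _ _, lt_absPrefix_blk_succ hβ (u j).isLt⟩, rfl⟩
    exact H3 j (by rw [hblkj]; exact hpos)
  · have hjk : (j : ℕ) < (k : ℕ) := by omega
    have hblkj : blk α (j : ℕ) = i := blk_eq_of hα j.isLt h1 (by omega)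
    have hblkk : blk α (k : ℕ) = i := blk_eq_of hα k.isLt (by omega) h2
    have hadj : (u k : ℕ) = (u j : ℕ) + 1 := H2 j k hk (by rw [hblkj, hblkk])
    have hconj : (inr u : Grn r n) * sGen r n j k * (inr u)⁻¹ = sGen r n (u j) (u k) := by
      rw [sGen, sGen, ← map_inv, ← map_mul, ← map_mul]
      congr 1
      exact (Equiv.swap_apply_apply u j k).symm
    rw [hconj]
    right
    refine ⟨u j, u k, hadj, ⟨blk β (u j : ℕ), blk_lt_length hβ (u j).isLt,
      absPrefix_blk_le _ _, ?_⟩, rfl⟩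
    have hbb : blk β (u k : ℕ) = blk β (u j : ℕ) := H1 k j (by rw [hblkj, hblkk])
    rw [← hbb]
    exact lt_absPrefix_blk_succ hβ (u k).isLt
-- chunk6: assembly
lemma Gmu_conj_of_equiv {lam mu : List ℤ} (hlam : IsSignedComp n lam)
    (hmu : IsSignedComp n mu) (e : Fin lam.length ≃ Fin mu.length)
    (hget : ∀ i, lam.get i = mu.get (e i)) :
    ∃ w : Equiv.Perm (Fin n),
      Gmu r n lam = (Gmu r n mu).map (MulAut.conj ((inr w : Grn r n)⁻¹)).toMonoidHom := by
  have hget' : ∀ i, mu.get i = lam.get (e.symm i) := fun i => by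
    rw [hget (e.symm i), Equiv.apply_symm_apply]
  set wf := wfun lam mu hlam hmu e hget with hwfdef
  set wg := wfun mu lam hmu hlam e.symm hget' with hwgdef
  have hgf : ∀ j, wg (wf j) = j := wfun_inv lam mu hlam hmu e hget hget'
  have hinj : Function.Injective wf := fun a b hab => by rw [← hgf a, hab, hgf b]
  have hfg : ∀ j, wf (wg j) = j := by
    intro j
    obtain ⟨x, hx⟩ := (Finite.injective_iff_surjective.mp hinj) j
    rw [← hx, hgf]
  let w : Equiv.Perm (Fin n) := ⟨wf, wg, hgf, hfg⟩
  have hwapp : ∀ j, w j = wf j := fun _ => rfl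
  have hwinv : ∀ j, w⁻¹ j = wg j := fun _ => rfl
  -- H-properties for w (lam → mu)
  have H1w : ∀ j1 j2 : Fin n, blk lam (j1 : ℕ) = blk lam (j2 : ℕ) →
      blk mu (w j1 : ℕ) = blk mu (w j2 : ℕ) := by
    intro j1 j2 hj
    rw [hwapp, hwapp, hwfdef, wfun_blk, wfun_blk]
    exact congrArg _ (congrArg e (Fin.ext hj))
  have H2w : ∀ j1 j2 : Fin n, (j2 : ℕ) = (j1 : ℕ) + 1 →
      blk lam (j1 : ℕ) = blk lam (j2 : ℕ) → (w j2 : ℕ) = (w j1 : ℕ) + 1 := by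
    intro j1 j2 h12 hj
    rw [hwapp, hwapp, hwfdef, wfun_val, wfun_val]
    have he : ((e ⟨blk lam (j2 : ℕ), blk_lt_length hlam j2.isLt⟩ : Fin mu.length) : ℕ)
        = ((e ⟨blk lam (j1 : ℕ), blk_lt_length hlam j1.isLt⟩ : Fin mu.length) : ℕ) :=
      congrArg _ (congrArg e (Fin.ext hj.symm))
    rw [he]
    have h1 : absPrefix lam (blk lam (j1 : ℕ)) ≤ (j1 : ℕ) := absPrefix_blk_le lam _
    have hs : absPrefix lam (blk lam (j2 : ℕ)) = absPrefix lam (blk lam (j1 : ℕ)) := by rw [hj]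
    omega
  have H3w : ∀ j : Fin n, 0 < lam.getD (blk lam (j : ℕ)) 0 →
      0 < mu.getD (blk mu (w j : ℕ)) 0 := by
    intro j hj
    rw [hwapp, hwfdef]
    exact wfun_H3 lam mu hlam hmu e hget j hj
  -- H-properties for w⁻¹ (mu → lam)
  have H1g : ∀ j1 j2 : Fin n, blk mu (j1 : ℕ) = blk mu (j2 : ℕ) →
      blk lam (w⁻¹ j1 : ℕ) = blk lam (w⁻¹ j2 : ℕ) := by
    intro j1 j2 hj
    rw [hwinv, hwinv, hwgdef, wfun_blk, wfun_blk]
    exact congrArg _ (congrArg e.symm (Fin.ext hj))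
  have H2g : ∀ j1 j2 : Fin n, (j2 : ℕ) = (j1 : ℕ) + 1 →
      blk mu (j1 : ℕ) = blk mu (j2 : ℕ) → (w⁻¹ j2 : ℕ) = (w⁻¹ j1 : ℕ) + 1 := by
    intro j1 j2 h12 hj
    rw [hwinv, hwinv, hwgdef, wfun_val, wfun_val]
    have he : ((e.symm ⟨blk mu (j2 : ℕ), blk_lt_length hmu j2.isLt⟩ : Fin lam.length) : ℕ)
        = ((e.symm ⟨blk mu (j1 : ℕ), blk_lt_length hmu j1.isLt⟩ : Fin lam.length) : ℕ) :=
      congrArg _ (congrArg e.symm (Fin.ext hj.symm))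
    rw [he]
    have h1 : absPrefix mu (blk mu (j1 : ℕ)) ≤ (j1 : ℕ) := absPrefix_blk_le mu _
    have hs : absPrefix mu (blk mu (j2 : ℕ)) = absPrefix mu (blk mu (j1 : ℕ)) := by rw [hj]
    omega
  have H3g : ∀ j : Fin n, 0 < mu.getD (blk mu (j : ℕ)) 0 →
      0 < lam.getD (blk lam (w⁻¹ j : ℕ)) 0 := by
    intro j hj
    rw [hwinv, hwgdef]
    exact wfun_H3 mu lam hmu hlam e.symm hget' j hj
  refine ⟨w, ?_⟩
  rw [Gmu, Gmu, MonoidHom.map_closure]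
  congr 1
  apply Set.eq_of_subset_of_subset
  · intro x hx
    have hy : (inr w : Grn r n) * x * (inr w)⁻¹ ∈ PiMu r n mu :=
      conj_PiMu_mem hlam hmu w H1w H2w H3w hx
    refine ⟨(inr w : Grn r n) * x * (inr w)⁻¹, hy, ?_⟩
    show (MulAut.conj ((inr w : Grn r n)⁻¹)) ((inr w : Grn r n) * x * (inr w)⁻¹) = x
    rw [MulAut.conj_apply]
    group
  · rintro x ⟨y, hy, rfl⟩
    have hmem : (inr w⁻¹ : Grn r n) * y * (inr w⁻¹)⁻¹ ∈ PiMu r n lam :=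
      conj_PiMu_mem hmu hlam w⁻¹ H1g H2g H3g hy
    have hrw : (MulAut.conj ((inr w : Grn r n)⁻¹)).toMonoidHom y
        = (inr w⁻¹ : Grn r n) * y * (inr w⁻¹)⁻¹ := by
      simp [MulAut.conj_apply]
    show (MulAut.conj ((inr w : Grn r n)⁻¹)).toMonoidHom y ∈ PiMu r n lam
    rw [hrw]
    exact hmem


theorem stmt12 (r n : ℕ) (hr : 2 ≤ r) (hn : 1 ≤ n) (lam mu : List ℤ)
    (hlam : IsSignedComp n lam) (hmu : IsSignedComp n mu) :
    (lam.Perm mu ↔ ∃ w : Equiv.Perm (Fin n),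
        Gmu r n lam = (Gmu r n mu).map (MulAut.conj ((inr w : Grn r n)⁻¹)).toMonoidHom) ∧
    (lam.Perm mu ↔ ∃ g : Grn r n,
        Gmu r n lam = (Gmu r n mu).map (MulAut.conj g⁻¹).toMonoidHom) := by
  have main1 : lam.Perm mu → ∃ w : Equiv.Perm (Fin n),
      Gmu r n lam = (Gmu r n mu).map (MulAut.conj ((inr w : Grn r n)⁻¹)).toMonoidHom := by
    intro hp
    obtain ⟨e, hget⟩ := exists_equiv_of_perm hp
    exact Gmu_conj_of_equiv hlam hmu e hget
  constructor
  · constructor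
    · exact main1
    · rintro ⟨w, hw⟩
      exact perm_of_conj hr hlam hmu (inr w) hw
  · constructor
    · intro hp
      obtain ⟨w, hw⟩ := main1 hp
      exact ⟨inr w, hw⟩
    · rintro ⟨g, hg⟩
      exact perm_of_conj hr hlam hmu g hg

end CycSol
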